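/- arXiv:2409.02730 — 3 statements merged into one kernel-verified Lean document; each statement's English description precedes it below -/
import Mathlib

section
/- Let S and S' be two distinct finite subsets of ℝ^3, each with at most n elements. Then there exists a polynomial P : ℝ^3 → ℝ of degree at most 2n such that the sum of P(r) over r in S differs from the sum of P(r') over r' in S'. -/
open MvPolynomial

private lemma distinguish_aux (n : ℕ) (S S' : Finset (Fin 3 → ℝ))
    (hS' : S'.card ≤ n) (x : Fin 3 → ℝ) (hx : x ∈ S) (hx' : x ∉ S') :
    ∃ P : MvPolynomial (Fin 3) ℝ, P.totalDegree ≤ 2 * n ∧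
      ∑ r ∈ S, MvPolynomial.eval r P ≠ ∑ r' ∈ S', MvPolynomial.eval r' P := by
  refine ⟨∏ y ∈ S', ∑ i, (X i - C (y i)) ^ 2, ?_, ?_⟩
  · calc (∏ y ∈ S', ∑ i, (X i - C (y i)) ^ 2).totalDegree
        ≤ ∑ y ∈ S', (∑ i, (X i - C (y i)) ^ 2).totalDegree :=
          totalDegree_finset_prod _ _
      _ ≤ ∑ y ∈ S', 2 := by
          refine Finset.sum_le_sum fun y _ => ?_
          refine le_trans (totalDegree_finset_sum _ _) ?_
          refine Finset.sup_le fun i _ => ?_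
          refine le_trans (totalDegree_pow _ _) ?_
          have h1 : (X i - C (y i) : MvPolynomial (Fin 3) ℝ).totalDegree ≤ 1 := by
            refine le_trans (totalDegree_sub _ _) ?_
            simp [totalDegree_X, totalDegree_C]
          omega
      _ = 2 * S'.card := by simp [Finset.sum_const, mul_comm]
      _ ≤ 2 * n := by omega
  · have heval : ∀ r : Fin 3 → ℝ,
        MvPolynomial.eval r (∏ y ∈ S', ∑ i, (X i - C (y i)) ^ 2)
          = ∏ y ∈ S', ∑ i, (r i - y i) ^ 2 := by
      intro r
      simp [map_prod, map_sum]
    have hzero : ∑ r' ∈ S', MvPolynomial.eval r'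
        (∏ y ∈ S', ∑ i, (X i - C (y i)) ^ 2) = 0 := by
      refine Finset.sum_eq_zero fun r hr => ?_
      rw [heval]
      exact Finset.prod_eq_zero hr (by simp)
    have hpos : 0 < ∑ r ∈ S, MvPolynomial.eval r
        (∏ y ∈ S', ∑ i, (X i - C (y i)) ^ 2) := by
      refine Finset.sum_pos' (fun r _ => ?_) ⟨x, hx, ?_⟩
      · rw [heval]
        exact Finset.prod_nonneg fun y _ =>
          Finset.sum_nonneg fun i _ => sq_nonneg _
      · rw [heval]
        refine Finset.prod_pos fun y hy => ?_
        have hxy : x ≠ y := fun h => hx' (h ▸ hy)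
        obtain ⟨i, hi⟩ : ∃ i, x i ≠ y i := by
          by_contra h
          push_neg at h
          exact hxy (funext h)
        refine Finset.sum_pos' (fun j _ => sq_nonneg _) ⟨i, Finset.mem_univ i, ?_⟩
        have h0 : x i - y i ≠ 0 := sub_ne_zero.mpr hi
        positivity
    rw [hzero]
    exact ne_of_gt hpos

/-- Two distinct finite subsets of `ℝ³`, each with at most `n` elements, can be
distinguished by a fundamental feature given by a polynomial of degree at most `2n`:
there is `P` with `∑_{r ∈ S} P(r) ≠ ∑_{r' ∈ S'} P(r')`. -/
theorem fundamental_features_determine_sets (n : ℕ) (S S' : Finset (Fin 3 → ℝ))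
    (hS : S.card ≤ n) (hS' : S'.card ≤ n) (hne : S ≠ S') :
    ∃ P : MvPolynomial (Fin 3) ℝ, P.totalDegree ≤ 2 * n ∧
      ∑ r ∈ S, MvPolynomial.eval r P ≠ ∑ r' ∈ S', MvPolynomial.eval r' P := by
  by_cases h : ∃ x ∈ S, x ∉ S'
  · obtain ⟨x, hx, hx'⟩ := h
    exact distinguish_aux n S S' hS' x hx hx'
  · push_neg at h
    have hsub : S ⊆ S' := h
    obtain ⟨x, hx, hx'⟩ : ∃ x ∈ S', x ∉ S := by
      by_contra hc
      push_neg at hc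
      exact hne (Finset.Subset.antisymm hsub hc)
    obtain ⟨P, hP, hPne⟩ := distinguish_aux n S' S hS x hx hx'
    exact ⟨P, hP, hPne.symm⟩
end

section
/- Equivalently, a finite set S ⊂ ℝ^3 with at most n elements is uniquely determined by its moment tensors Σ_{r∈S} r^{⊗k} for k = 0, 1, ..., 2n. -/
open MvPolynomial Finset

private lemma prod_idx_eq (r : Fin 3 → ℝ) (d0 d1 d2 : ℕ) :
    (∏ j : Fin (d0 + d1 + d2), r (if (j : ℕ) < d0 then 0 else if (j : ℕ) < d0 + d1 then 1 else 2))
      = r 0 ^ d0 * r 1 ^ d1 * r 2 ^ d2 := by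
  rw [Fin.prod_univ_eq_prod_range (fun j => r (if j < d0 then 0 else if j < d0 + d1 then 1 else 2))]
  rw [Finset.prod_range_add, Finset.prod_range_add]
  congr 1
  · congr 1
    · rw [Finset.prod_congr rfl (fun i hi => by
        simp only [Finset.mem_range] at hi
        rw [if_pos hi]), Finset.prod_const, Finset.card_range]
    · rw [Finset.prod_congr rfl (fun i hi => by
        simp only [Finset.mem_range] at hi
        rw [if_neg (by omega), if_pos (by omega)]), Finset.prod_const, Finset.card_range]
  · rw [Finset.prod_congr rfl (fun i hi => by
      simp only [Finset.mem_range] at hi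
      rw [if_neg (by omega), if_neg (by omega)]), Finset.prod_const, Finset.card_range]

private lemma sum_eval_eq (n : ℕ) (S S' : Finset (Fin 3 → ℝ))
    (hmom : ∀ k : ℕ, k ≤ 2 * n → ∀ idx : Fin k → Fin 3,
      ∑ r ∈ S, ∏ j : Fin k, r (idx j) = ∑ r ∈ S', ∏ j : Fin k, r (idx j))
    (P : MvPolynomial (Fin 3) ℝ) (hP : P.totalDegree ≤ 2 * n) :
    ∑ r ∈ S, eval r P = ∑ r ∈ S', eval r P := by
  conv_lhs => rw [P.as_sum]
  conv_rhs => rw [P.as_sum]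
  simp only [map_sum, eval_monomial]
  rw [Finset.sum_comm, Finset.sum_comm (s := S')]
  apply Finset.sum_congr rfl
  intro d hd
  rw [← Finset.mul_sum, ← Finset.mul_sum]
  congr 1
  have hdeg : d 0 + d 1 + d 2 ≤ 2 * n := by
    have h1 : (d.sum fun _ e => e) ≤ P.totalDegree := le_totalDegree hd
    have h2 : (d.sum fun _ e => e) = d 0 + d 1 + d 2 := by
      rw [Finsupp.sum_fintype _ _ (fun _ => rfl), Fin.sum_univ_three]
    omega
  have key := hmom (d 0 + d 1 + d 2) hdeg
    (fun j => if (j : ℕ) < d 0 then 0 else if (j : ℕ) < d 0 + d 1 then 1 else 2)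
  have hprod : ∀ r : Fin 3 → ℝ, (d.prod fun i e => r i ^ e) = r 0 ^ d 0 * r 1 ^ d 1 * r 2 ^ d 2 := by
    intro r
    rw [Finsupp.prod_fintype _ _ (fun _ => pow_zero _), Fin.prod_univ_three]
  simp only [hprod]
  calc ∑ r ∈ S, r 0 ^ d 0 * r 1 ^ d 1 * r 2 ^ d 2
      = ∑ r ∈ S, ∏ j : Fin (d 0 + d 1 + d 2),
          r (if (j : ℕ) < d 0 then 0 else if (j : ℕ) < d 0 + d 1 then 1 else 2) := by
        exact (Finset.sum_congr rfl fun r _ => (prod_idx_eq r (d 0) (d 1) (d 2)).symm)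
    _ = ∑ r ∈ S', ∏ j : Fin (d 0 + d 1 + d 2),
          r (if (j : ℕ) < d 0 then 0 else if (j : ℕ) < d 0 + d 1 then 1 else 2) := key
    _ = ∑ r ∈ S', r 0 ^ d 0 * r 1 ^ d 1 * r 2 ^ d 2 :=
        Finset.sum_congr rfl fun r _ => prod_idx_eq r (d 0) (d 1) (d 2)

private lemma subset_of_moments (n : ℕ) (S S' : Finset (Fin 3 → ℝ))
    (hS' : S'.card ≤ n)
    (hmom : ∀ k : ℕ, k ≤ 2 * n → ∀ idx : Fin k → Fin 3,
      ∑ r ∈ S, ∏ j : Fin k, r (idx j) = ∑ r ∈ S', ∏ j : Fin k, r (idx j)) :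
    S ⊆ S' := by
  set Q : MvPolynomial (Fin 3) ℝ :=
    ∏ s ∈ S', ∑ i : Fin 3, (X i + C (-(s i))) ^ 2 with hQ
  have hdeg : Q.totalDegree ≤ 2 * n := by
    refine le_trans (totalDegree_finset_prod _ _) ?_
    refine le_trans (Finset.sum_le_card_nsmul _ _ 2 ?_) ?_
    · intro s _
      refine le_trans (totalDegree_finset_sum _ _) ?_
      refine Finset.sup_le fun i _ => ?_
      refine le_trans (totalDegree_pow _ _) ?_
      have : (X i + C (-(s i)) : MvPolynomial (Fin 3) ℝ).totalDegree ≤ 1 := by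
        refine le_trans (totalDegree_add _ _) ?_
        simp [totalDegree_X, totalDegree_C]
      omega
    · simp only [smul_eq_mul]
      omega
  have heval : ∀ r : Fin 3 → ℝ, eval r Q = ∏ s ∈ S', ∑ i : Fin 3, (r i - s i) ^ 2 := by
    intro r
    simp only [hQ, map_prod, map_sum, map_pow, map_add, eval_X, eval_C]
    exact Finset.prod_congr rfl fun s _ => Finset.sum_congr rfl fun i _ => by ring
  have hzero : ∀ r ∈ S', eval r Q = 0 := by
    intro r hr
    rw [heval]
    apply Finset.prod_eq_zero hr
    simp
  have hsum := sum_eval_eq n S S' hmom Q hdeg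
  rw [Finset.sum_eq_zero hzero] at hsum
  have hnonneg : ∀ r ∈ S, 0 ≤ eval r Q := by
    intro r _
    rw [heval]
    exact Finset.prod_nonneg fun s _ => Finset.sum_nonneg fun i _ => sq_nonneg _
  have hall : ∀ r ∈ S, eval r Q = 0 := by
    intro r hr
    exact (Finset.sum_eq_zero_iff_of_nonneg hnonneg).1 hsum r hr
  intro r hr
  have := hall r hr
  rw [heval] at this
  obtain ⟨s, hs, hs0⟩ := Finset.prod_eq_zero_iff.1 this
  have : ∀ i : Fin 3, r i = s i := by
    intro i
    have h0 : (r i - s i) ^ 2 = 0 := by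
      have := (Finset.sum_eq_zero_iff_of_nonneg (fun i _ => sq_nonneg (r i - s i))).1 hs0 i
        (Finset.mem_univ i)
      exact this
    have := pow_eq_zero_iff (n := 2) (by norm_num) |>.1 h0
    linarith [sub_eq_zero.1 this]
  have : r = s := funext this
  rwa [this]

/-- A finite set `S ⊂ ℝ³` with at most `n` elements is determined by its moment tensors
`∑_{r ∈ S} r^{⊗k}` for `k = 0, 1, ..., 2n`.  The `(i₁,...,i_k)` entry of the `k`-th moment
tensor is `∑_{r ∈ S} ∏_j r_{i_j}`. -/
theorem moments_determine_set (n : ℕ) (S S' : Finset (Fin 3 → ℝ))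
    (hS : S.card ≤ n) (hS' : S'.card ≤ n)
    (hmom : ∀ k : ℕ, k ≤ 2 * n → ∀ idx : Fin k → Fin 3,
      ∑ r ∈ S, ∏ j : Fin k, r (idx j) = ∑ r ∈ S', ∏ j : Fin k, r (idx j)) :
    S = S' := by
  refine Finset.Subset.antisymm (subset_of_moments n S S' hS' hmom) ?_
  exact subset_of_moments n S' S hS (fun k hk idx => (hmom k hk idx).symm)
end

section
/- Let G be a compact group acting orthogonally on a finite-dimensional Euclidean vector space V, and let v, w ∈ V be points in distinct G-orbits. Then there exists a G-invariant polynomial P : V → ℝ with P(v) ≠ P(w). -/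
open MeasureTheory Finset
open scoped RealInnerProductSpace

set_option maxHeartbeats 1000000 in
/-- If a compact group `G` acts orthogonally (by linear isometries, continuously) on a
finite-dimensional Euclidean space, and `v, w` lie in distinct `G`-orbits, then there is a
`G`-invariant polynomial `P` with `P(v) ≠ P(w)`. -/
theorem exists_invariant_polynomial_separating_orbits
    {G : Type*} [Group G] [TopologicalSpace G] [IsTopologicalGroup G] [CompactSpace G]
    (n : ℕ) (ρ : G →* (EuclideanSpace ℝ (Fin n) ≃ₗᵢ[ℝ] EuclideanSpace ℝ (Fin n)))
    (hcont : Continuous fun p : G × EuclideanSpace ℝ (Fin n) => ρ p.1 p.2)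
    (v w : EuclideanSpace ℝ (Fin n))
    (horb : ∀ g : G, ρ g v ≠ w) :
    ∃ P : MvPolynomial (Fin n) ℝ,
      (∀ (g : G) (x : EuclideanSpace ℝ (Fin n)),
        MvPolynomial.eval (ρ g x) P = MvPolynomial.eval x P) ∧
      MvPolynomial.eval v P ≠ MvPolynomial.eval w P := by
  classical
  borelize G
  set μ : Measure G := Measure.haarMeasure (⊤ : TopologicalSpace.PositiveCompacts G) with hμdef
  haveI : μ.IsHaarMeasure := Measure.isHaarMeasure_haarMeasure _
  haveI : μ.Regular := Measure.regular_haarMeasure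
  haveI : μ.IsMulLeftInvariant := Measure.isMulLeftInvariant_haarMeasure _
  have hμuniv : μ Set.univ = 1 := by
    have := Measure.haarMeasure_self (K₀ := (⊤ : TopologicalSpace.PositiveCompacts G))
    rwa [TopologicalSpace.PositiveCompacts.coe_top] at this
  haveI : IsFiniteMeasure μ := ⟨by rw [hμuniv]; exact ENNReal.one_lt_top⟩
  -- continuity facts
  have hcv : Continuous fun g : G => ρ g v :=
    hcont.comp (continuous_id.prodMk continuous_const)
  have hcvi : ∀ i : Fin n, Continuous fun g : G => (ρ g v) i := fun i =>
    (EuclideanSpace.proj i).continuous.comp hcv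
  have hintg : ∀ f : G → ℝ, Continuous f → Integrable f μ := fun f hf =>
    hf.integrable_of_hasCompactSupport (HasCompactSupport.of_compactSpace f)
  -- basic constants
  set R : ℝ := (2 * ‖v‖ + ‖w‖) ^ 2 + 1 with hRdef
  have hR : 0 < R := by positivity
  have hnorm : ∀ g : G, ‖ρ g v‖ = ‖v‖ := fun g => (ρ g).norm_map v
  have hb : ∀ (x : EuclideanSpace ℝ (Fin n)), ‖x‖ ≤ ‖v‖ + ‖w‖ →
      ∀ g : G, ‖x - ρ g v‖ ^ 2 ≤ R - 1 := by
    intro x hx g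
    have h1 : ‖x - ρ g v‖ ≤ 2 * ‖v‖ + ‖w‖ := by
      calc ‖x - ρ g v‖ ≤ ‖x‖ + ‖ρ g v‖ := norm_sub_le _ _
        _ = ‖x‖ + ‖v‖ := by rw [hnorm]
        _ ≤ 2 * ‖v‖ + ‖w‖ := by linarith
    calc ‖x - ρ g v‖ ^ 2 ≤ (2 * ‖v‖ + ‖w‖) ^ 2 :=
          pow_le_pow_left₀ (norm_nonneg _) h1 2
      _ = R - 1 := by rw [hRdef]; ring
  have hvb : ‖v‖ ≤ ‖v‖ + ‖w‖ := by have := norm_nonneg w; linarith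
  have hwb : ‖w‖ ≤ ‖v‖ + ‖w‖ := by have := norm_nonneg v; linarith
  -- distance from w to the orbit of v
  obtain ⟨ε, hε0, hεle⟩ : ∃ ε : ℝ, 0 < ε ∧ ∀ g : G, ε ≤ ‖w - ρ g v‖ := by
    have hOc : IsCompact (Set.range fun g : G => ρ g v) := isCompact_range hcv
    have hne : (Set.range fun g : G => ρ g v).Nonempty := Set.range_nonempty _
    have hwO : w ∉ Set.range fun g : G => ρ g v := by
      rintro ⟨g, hg⟩; exact horb g hg
    refine ⟨Metric.infDist w (Set.range fun g : G => ρ g v), ?_, ?_⟩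
    · rcases hOc.exists_infDist_eq_dist hne w with ⟨y, hyO, hy⟩
      rw [hy]
      exact dist_pos.mpr fun h => hwO (h ▸ hyO)
    · intro g
      rw [← dist_eq_norm]
      exact Metric.infDist_le_dist_of_mem ⟨g, rfl⟩
  have hε2 : ε ^ 2 ≤ R - 1 := by
    have h1 := hb w hwb 1
    have h2 : ε ≤ ‖w - ρ (1 : G) v‖ := hεle 1
    nlinarith [norm_nonneg (w - ρ (1 : G) v)]
  -- the open set U around 1
  set s : ℝ := ε ^ 2 / 2 with hsdef
  have hs0 : 0 < s := by positivity
  set U : Set G := {g | ‖v - ρ g v‖ ^ 2 < s} with hUdef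
  have hUopen : IsOpen U :=
    isOpen_lt ((continuous_const.sub hcv).norm.pow 2) continuous_const
  have hU1 : (1 : G) ∈ U := by
    have : ρ (1 : G) v = v := by rw [map_one]; rfl
    simp [hUdef, this, hs0]
  have hcμ : 0 < (μ U).toReal :=
    ENNReal.toReal_pos (hUopen.measure_pos μ ⟨1, hU1⟩).ne' (measure_ne_top μ U)
  set cμ : ℝ := (μ U).toReal with hcμdef
  -- ratios
  set r₁ : ℝ := (R - ε ^ 2) / R with hr₁def
  set r₂ : ℝ := (R - s) / R with hr₂def
  have hr₁0 : 0 < r₁ := div_pos (by linarith) hR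
  have hr₂0 : 0 < r₂ := div_pos (by nlinarith) hR
  have hr₁₂ : r₁ < r₂ := by
    rw [hr₁def, hr₂def, div_lt_div_iff₀ hR hR]
    nlinarith
  obtain ⟨N, hN⟩ : ∃ N : ℕ, (r₁ / r₂) ^ N < cμ :=
    exists_pow_lt_of_lt_one hcμ ((div_lt_one hr₂0).mpr hr₁₂)
  have hkeyN : r₁ ^ N < r₂ ^ N * cμ := by
    have h2 : r₁ ^ N / r₂ ^ N < cμ := by rw [← div_pow]; exact hN
    have h3 := mul_lt_mul_of_pos_right h2 (pow_pos hr₂0 N)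
    rwa [div_mul_cancel₀ _ (pow_ne_zero N hr₂0.ne'), mul_comm cμ] at h3
  -- the function to be represented by a polynomial
  set b : ℝ := 2 / R with hbdef
  set ax : EuclideanSpace ℝ (Fin n) → ℝ := fun x => (R - ‖v‖ ^ 2 - ⟪x, x⟫) / R with haxdef
  set F : EuclideanSpace ℝ (Fin n) → ℝ :=
    fun x => ∫ g, (ax x + b * ⟪x, ρ g v⟫) ^ N ∂μ with hFdef
  have hkey : ∀ x y : EuclideanSpace ℝ (Fin n), ‖y‖ = ‖v‖ →
      ax x + b * ⟪x, y⟫ = 1 - ‖x - y‖ ^ 2 / R := by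
    intro x y hy
    have h1 : ‖x - y‖ ^ 2 = ‖x‖ ^ 2 - 2 * ⟪x, y⟫ + ‖y‖ ^ 2 := norm_sub_sq_real x y
    have h2 : ⟪x, x⟫ = ‖x‖ ^ 2 := real_inner_self_eq_norm_sq x
    simp only [haxdef, hbdef]
    rw [h2, h1, hy]
    field_simp
    ring
  -- invariance of F
  have hmulapply : ∀ (a c : G) (y : EuclideanSpace ℝ (Fin n)),
      ρ (a * c) y = ρ a (ρ c y) := by
    intro a c y; rw [map_mul]; rfl
  have hFinv : ∀ (h : G) (x : EuclideanSpace ℝ (Fin n)), F (ρ h x) = F x := by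
    intro h x
    have hstep : ∀ g : G,
        ax (ρ h x) + b * ⟪ρ h x, ρ g v⟫ = ax x + b * ⟪x, ρ (h⁻¹ * g) v⟫ := by
      intro g
      have h1 : ⟪ρ h x, ρ h x⟫ = ⟪x, x⟫ := (ρ h).inner_map_map x x
      have h2 : ρ g v = ρ h (ρ (h⁻¹ * g) v) := by
        rw [← hmulapply, mul_inv_cancel_left]
      have h3 : ⟪ρ h x, ρ g v⟫ = ⟪x, ρ (h⁻¹ * g) v⟫ := by
        rw [h2]; exact (ρ h).inner_map_map x _
      simp only [haxdef, h1, h3]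
    have e1 : (fun g : G => (ax (ρ h x) + b * ⟪ρ h x, ρ g v⟫) ^ N)
        = fun g : G => (ax x + b * ⟪x, ρ (h⁻¹ * g) v⟫) ^ N :=
      funext fun g => by rw [hstep g]
    calc F (ρ h x) = ∫ g, (ax x + b * ⟪x, ρ (h⁻¹ * g) v⟫) ^ N ∂μ := by
          simp only [hFdef]
          rw [e1]
      _ = F x := by
          simp only [hFdef]
          exact integral_mul_left_eq_self (fun g => (ax x + b * ⟪x, ρ g v⟫) ^ N) h⁻¹
  -- inner product coordinates
  have hinner : ∀ x y : EuclideanSpace ℝ (Fin n), ⟪x, y⟫ = ∑ i, x i * y i := by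
    intro x y
    simp [PiLp.inner_apply, RCLike.inner_apply, conj_trivial]
    exact Finset.sum_congr rfl fun i _ => mul_comm _ _
  -- pointwise expansion of the integrand
  have hpt : ∀ (x : EuclideanSpace ℝ (Fin n)) (g : G),
      (ax x + b * ⟪x, ρ g v⟫) ^ N =
        ∑ k ∈ range (N + 1), ∑ p : Fin k → Fin n,
          ((N.choose k : ℝ) * b ^ k * (ax x) ^ (N - k) * ∏ j, x (p j)) *
            ∏ j, (ρ g v) (p j) := by
    intro x g
    rw [add_comm (ax x), add_pow]
    refine Finset.sum_congr rfl fun k hk => ?_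
    rw [mul_pow, hinner, Fintype.sum_pow, Finset.mul_sum, Finset.sum_mul, Finset.sum_mul]
    refine Finset.sum_congr rfl fun p _ => ?_
    rw [Finset.prod_mul_distrib]
    ring
  -- the polynomial
  set P : MvPolynomial (Fin n) ℝ := ∑ k ∈ range (N + 1),
      MvPolynomial.C ((N.choose k : ℝ) * b ^ k) *
        (MvPolynomial.C ((R - ‖v‖ ^ 2) / R) -
          MvPolynomial.C (1 / R) * ∑ i, MvPolynomial.X i * MvPolynomial.X i) ^ (N - k) *
        ∑ p : Fin k → Fin n,
          MvPolynomial.C (∫ g, ∏ j, (ρ g v) (p j) ∂μ) * ∏ j, MvPolynomial.X (p j)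
    with hPdef
  have heval : ∀ x : EuclideanSpace ℝ (Fin n), MvPolynomial.eval x P = F x := by
    intro x
    have haxx : ax x = (R - ‖v‖ ^ 2) / R - 1 / R * ∑ i, x i * x i := by
      simp only [haxdef]
      rw [hinner x x]
      ring
    have hintp : ∀ (k : ℕ) (p : Fin k → Fin n) (c : ℝ),
        Integrable (fun g : G => c * ∏ j, (ρ g v) (p j)) μ := fun k p c =>
      hintg _ (continuous_const.mul (continuous_finset_prod _ fun j _ => hcvi (p j)))
    have hFx : F x = ∑ k ∈ range (N + 1), ∑ p : Fin k → Fin n,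
        ((N.choose k : ℝ) * b ^ k * (ax x) ^ (N - k) * ∏ j, x (p j)) *
          ∫ g, ∏ j, (ρ g v) (p j) ∂μ := by
      simp only [hFdef]
      have e1 : (fun g : G => (ax x + b * ⟪x, ρ g v⟫) ^ N) = fun g : G =>
          ∑ k ∈ range (N + 1), ∑ p : Fin k → Fin n,
            ((N.choose k : ℝ) * b ^ k * (ax x) ^ (N - k) * ∏ j, x (p j)) *
              ∏ j, (ρ g v) (p j) :=
        funext fun g => hpt x g
      rw [e1, integral_finset_sum _ fun k _ => integrable_finset_sum _ fun p _ => hintp k p _]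
      refine Finset.sum_congr rfl fun k _ => ?_
      rw [integral_finset_sum _ fun p _ => hintp k p _]
      exact Finset.sum_congr rfl fun p _ => integral_const_mul _ _
    rw [hFx, hPdef]
    simp only [map_sum, map_mul, map_pow, map_sub, map_prod, MvPolynomial.eval_C,
      MvPolynomial.eval_X]
    refine Finset.sum_congr rfl fun k _ => ?_
    rw [← haxx, Finset.mul_sum]
    refine Finset.sum_congr rfl fun p _ => ?_
    ring
  -- the estimate at w
  have hcontw : Continuous fun g : G => (1 - ‖w - ρ g v‖ ^ 2 / R) ^ N :=
    (continuous_const.sub (((continuous_const.sub hcv).norm.pow 2).div_const R)).pow N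
  have hcontv : Continuous fun g : G => (1 - ‖v - ρ g v‖ ^ 2 / R) ^ N :=
    (continuous_const.sub (((continuous_const.sub hcv).norm.pow 2).div_const R)).pow N
  have hwle : F w ≤ r₁ ^ N := by
    have hptw : ∀ g : G, (ax w + b * ⟪w, ρ g v⟫) ^ N = (1 - ‖w - ρ g v‖ ^ 2 / R) ^ N :=
      fun g => by rw [hkey w _ (hnorm g)]
    have hbd : ∀ g : G, (1 - ‖w - ρ g v‖ ^ 2 / R) ^ N ≤ r₁ ^ N := by
      intro g
      have ht1 : ‖w - ρ g v‖ ^ 2 ≤ R - 1 := hb w hwb g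
      have ht2 : ε ^ 2 ≤ ‖w - ρ g v‖ ^ 2 := pow_le_pow_left₀ hε0.le (hεle g) 2
      have h0 : (0:ℝ) ≤ 1 - ‖w - ρ g v‖ ^ 2 / R := by
        rw [sub_nonneg, div_le_one hR]; linarith
      have hle : 1 - ‖w - ρ g v‖ ^ 2 / R ≤ r₁ := by
        have hr₁' : r₁ = 1 - ε ^ 2 / R := by rw [hr₁def]; field_simp
        rw [hr₁']
        gcongr
      exact pow_le_pow_left₀ h0 hle N
    have ew : (fun g : G => (ax w + b * ⟪w, ρ g v⟫) ^ N)
        = fun g : G => (1 - ‖w - ρ g v‖ ^ 2 / R) ^ N := funext fun g => hptw g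
    calc F w = ∫ g, (1 - ‖w - ρ g v‖ ^ 2 / R) ^ N ∂μ := by
          simp only [hFdef]; rw [ew]
      _ ≤ ∫ _g, r₁ ^ N ∂μ := integral_mono (hintg _ hcontw) (integrable_const _) hbd
      _ = r₁ ^ N := by simp [integral_const, Measure.real, hμuniv]
  -- the estimate at v
  have hvge : r₂ ^ N * cμ ≤ F v := by
    have hptv : ∀ g : G, (ax v + b * ⟪v, ρ g v⟫) ^ N = (1 - ‖v - ρ g v‖ ^ 2 / R) ^ N :=
      fun g => by rw [hkey v _ (hnorm g)]
    have hnn : ∀ g : G, (0:ℝ) ≤ (1 - ‖v - ρ g v‖ ^ 2 / R) ^ N := by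
      intro g
      have ht1 : ‖v - ρ g v‖ ^ 2 ≤ R - 1 := hb v hvb g
      have h0 : (0:ℝ) ≤ 1 - ‖v - ρ g v‖ ^ 2 / R := by
        rw [sub_nonneg, div_le_one hR]; linarith
      positivity
    have ev : (fun g : G => (ax v + b * ⟪v, ρ g v⟫) ^ N)
        = fun g : G => (1 - ‖v - ρ g v‖ ^ 2 / R) ^ N := funext fun g => hptv g
    have hintv : Integrable (fun g : G => (1 - ‖v - ρ g v‖ ^ 2 / R) ^ N) μ :=
      hintg _ hcontv
    have h1 : r₂ ^ N * cμ ≤ ∫ g in U, (1 - ‖v - ρ g v‖ ^ 2 / R) ^ N ∂μ := by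
      rw [mul_comm]; show μ.real U • r₂ ^ N ≤ _
      apply setIntegral_ge_of_const_le hUopen.measurableSet (measure_ne_top μ U)
      · intro g hg
        have hgU : ‖v - ρ g v‖ ^ 2 < s := hg
        have hsR : s / R ≤ 1 := by
          rw [div_le_one hR]; nlinarith
        have h0 : (0:ℝ) ≤ 1 - s / R := by linarith
        have hle : r₂ ≤ 1 - ‖v - ρ g v‖ ^ 2 / R := by
          have hr₂' : r₂ = 1 - s / R := by rw [hr₂def]; field_simp
          rw [hr₂']
          gcongr
        exact pow_le_pow_left₀ hr₂0.le hle N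
      · exact hintv.integrableOn
    have h2 : ∫ g in U, (1 - ‖v - ρ g v‖ ^ 2 / R) ^ N ∂μ ≤
        ∫ g, (1 - ‖v - ρ g v‖ ^ 2 / R) ^ N ∂μ :=
      setIntegral_le_integral hintv (Filter.Eventually.of_forall hnn)
    have h3 : F v = ∫ g, (1 - ‖v - ρ g v‖ ^ 2 / R) ^ N ∂μ := by
      simp only [hFdef]; rw [ev]
    rw [h3]
    exact le_trans h1 h2
  refine ⟨P, fun g x => by rw [heval, heval, hFinv], ?_⟩
  rw [heval, heval]
  have : F w < F v := lt_of_le_of_lt hwle (lt_of_lt_of_le hkeyN hvge)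
  exact ne_of_gt this
end
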